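/- For all integers n ≥ 2 and k ≥ 1, the sequence defined by O(n,1) = T(n+1) and O(n,k) = O(n,k-1)·T(n) − n² + 1, where T(m) = m(m+1)/2 is the m-th triangular number, satisfies the closed form O(n,k) = ((n+4)·(n(n+1)/2)^k + 2(n+1)) / (n+2). -/

import Mathlib

theorem stmt_0 (n : ℤ) (hn : 2 ≤ n) (O : ℕ → ℤ)
    (h1 : O 1 = (n + 1) * (n + 2) / 2)
    (hrec : ∀ k : ℕ, 2 ≤ k → O k = O (k - 1) * (n * (n + 1) / 2) - n ^ 2 + 1) :
    ∀ k : ℕ, 1 ≤ k →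
      O k = ((n + 4) * (n * (n + 1) / 2) ^ k + 2 * (n + 1)) / (n + 2) := by
  set T : ℤ := n * (n + 1) / 2 with hTdef
  have hT : 2 * T = n * (n + 1) := by
    have h2 : (2 : ℤ) ∣ n * (n + 1) := (Int.even_mul_succ_self n).two_dvd
    rw [hTdef, Int.mul_ediv_cancel' h2]
  have hO1 : O 1 = T + n + 1 := by
    have h2 : (2 : ℤ) ∣ (n + 1) * (n + 2) := by
      have := (Int.even_mul_succ_self (n + 1)).two_dvd
      rw [show n + 2 = n + 1 + 1 by ring]; exact this
    have : 2 * O 1 = (n + 1) * (n + 2) := by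
      rw [h1, Int.mul_ediv_cancel' h2]
    linarith [hT]
  have key : ∀ k : ℕ, 1 ≤ k → (n + 2) * O k = (n + 4) * T ^ k + 2 * (n + 1) := by
    intro k hk
    induction k with
    | zero => omega
    | succ m ih =>
      rcases Nat.eq_or_lt_of_le hk with h | h
      · have hm : m = 0 := by omega
        subst hm
        rw [hO1]; ring_nf; linarith [hT]
      · have hm : 1 ≤ m := by omega
        have ihm := ih hm
        have hrecm := hrec (m + 1) (by omega)
        simp only [Nat.add_sub_cancel] at hrecm
        rw [hrecm]
        have : (n + 2) * (O m * T - n ^ 2 + 1)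
            = ((n + 2) * O m) * T - (n + 2) * (n ^ 2 - 1) := by ring
        rw [this, ihm]
        have : ((n + 4) * T ^ m + 2 * (n + 1)) * T
            = (n + 4) * T ^ (m + 1) + (2 * (n + 1)) * T := by ring
        rw [this]
        nlinarith [hT]
  intro k hk
  have h := key k hk
  have hne : n + 2 ≠ 0 := by omega
  rw [h.symm, Int.mul_ediv_cancel_left _ hne]
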